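/- Let n ≥ 2, let σ : ℂ → ℂ be a field endomorphism (a unital ring homomorphism), and let P, Q ∈ M_n(ℂ) be invertible. If the map Φ : M_n(ℂ) → M_n(ℂ) defined by Φ(A) = P · σ(A) · Q (σ applied entrywise) preserves mutual strong Birkhoff–James orthogonality in one direction, then σ is either the identity on ℂ or complex conjugation, and P is a (nonzero) scalar multiple of a unitary matrix, i.e., P*P is a positive scalar multiple of the identity. -/

import Mathlib

open Matrix
open scoped Matrix.Norms.L2Operator

/-- `a` is strongly Birkhoff–James orthogonal to `b`. -/
def StrongBJ {𝔄 : Type*} [NormedRing 𝔄] (a b : 𝔄) : Prop :=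
  ∀ c : 𝔄, ‖a‖ ≤ ‖a + b * c‖

/-- `a` and `b` are mutually strongly Birkhoff–James orthogonal. -/
def MutualBJ {𝔄 : Type*} [NormedRing 𝔄] (a b : 𝔄) : Prop :=
  StrongBJ a b ∧ StrongBJ b a

variable {n : ℕ}

noncomputable def ev {n : ℕ} (v : Fin n → ℂ) : EuclideanSpace ℂ (Fin n) :=
  (WithLp.equiv 2 _).symm v

lemma ev_inner (u v : Fin n → ℂ) : @inner ℂ _ _ (ev u) (ev v) = star u ⬝ᵥ v :=
  by rw [dotProduct_comm]; exact EuclideanSpace.inner_toLp_toLp u v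

lemma mulVec_vecMulVec (x y z : Fin n → ℂ) : vecMulVec x y *ᵥ z = (y ⬝ᵥ z) • x := by
  ext i
  simp only [vecMulVec_apply, mulVec, dotProduct, Pi.smul_apply, smul_eq_mul, Finset.sum_mul]
  exact Finset.sum_congr rfl fun k _ => by ring

lemma mul_vecMulVec (P : Matrix (Fin n) (Fin n) ℂ) (a b : Fin n → ℂ) :
    P * vecMulVec a b = vecMulVec (P *ᵥ a) b := by
  ext i j
  simp [vecMulVec_apply, mul_apply, mulVec, dotProduct, Finset.sum_mul, mul_assoc]

lemma vecMulVec_mul (Q : Matrix (Fin n) (Fin n) ℂ) (a b : Fin n → ℂ) :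
    vecMulVec a b * Q = vecMulVec a (b ᵥ* Q) := by
  ext i j
  simp [vecMulVec_apply, mul_apply, vecMul, dotProduct, Finset.mul_sum, mul_assoc]

lemma map_vecMulVec (σ : ℂ →+* ℂ) (a b : Fin n → ℂ) :
    (vecMulVec a b).map σ = vecMulVec (σ ∘ a) (σ ∘ b) := by
  ext i j
  simp [vecMulVec_apply]

lemma ev_norm_star (y : Fin n → ℂ) : ‖ev (star y)‖ = ‖ev y‖ := by
  simp [ev, EuclideanSpace.norm_eq]

lemma ev_smul (c : ℂ) (x : Fin n → ℂ) : ev (c • x) = c • ev x := rfl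
lemma ev_add (x y : Fin n → ℂ) : ev (x + y) = ev x + ev y := rfl

lemma dot_star_self (y : Fin n → ℂ) : y ⬝ᵥ star y = ((‖ev y‖ : ℂ)) ^ 2 := by
  rw [dotProduct_comm, ← ev_inner, inner_self_eq_norm_sq_to_K]
  norm_cast

lemma ev_mulVec_le (A : Matrix (Fin n) (Fin n) ℂ) (z : Fin n → ℂ) :
    ‖ev (A *ᵥ z)‖ ≤ ‖A‖ * ‖ev z‖ :=
  A.l2_opNorm_mulVec (ev z)

lemma norm_vecMulVec_le (x y : Fin n → ℂ) :
    ‖vecMulVec x y‖ ≤ ‖ev x‖ * ‖ev y‖ := by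
  rw [Matrix.l2_opNorm_def]
  refine ContinuousLinearMap.opNorm_le_bound _ (by positivity) fun z => ?_
  have h1 : (Matrix.toEuclideanLin (vecMulVec x y)).toContinuousLinearMap z
      = ev (vecMulVec x y *ᵥ (WithLp.equiv 2 _ z)) := rfl
  rw [LinearEquiv.trans_apply, h1, mulVec_vecMulVec, ev_smul, norm_smul]
  have h2 : y ⬝ᵥ WithLp.equiv 2 _ z = @inner ℂ _ _ (ev (star y)) z := by
    rw [EuclideanSpace.inner_eq_star_dotProduct]
    simp [ev, dotProduct_comm]
  rw [h2]
  calc ‖@inner ℂ _ _ (ev (star y)) z‖ * ‖ev x‖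
      ≤ (‖ev (star y)‖ * ‖z‖) * ‖ev x‖ := by
        gcongr; exact norm_inner_le_norm _ _
    _ = ‖ev x‖ * ‖ev y‖ * ‖z‖ := by rw [ev_norm_star]; ring

lemma norm_vecMulVec_ge (x y : Fin n → ℂ) :
    ‖ev x‖ * ‖ev y‖ ≤ ‖vecMulVec x y‖ := by
  rcases eq_or_ne y 0 with rfl | hy
  · simp [ev]
  have hy' : ‖ev y‖ ≠ 0 := by
    simp only [ne_eq, norm_eq_zero]
    exact fun h => hy (congrArg (WithLp.equiv 2 _) h)
  have := ev_mulVec_le (vecMulVec x y) (star y)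
  rw [mulVec_vecMulVec, dot_star_self, ev_smul, norm_smul, ev_norm_star] at this
  have hsq : ‖((‖ev y‖ : ℂ)) ^ 2‖ = ‖ev y‖ * ‖ev y‖ := by
    rw [norm_pow]
    simp [sq, abs_of_nonneg (norm_nonneg _)]
  rw [hsq] at this
  have hpos : 0 < ‖ev y‖ := lt_of_le_of_ne (norm_nonneg _) (Ne.symm hy')
  nlinarith [norm_nonneg (ev x)]

lemma vecMulVec_zero_right (x : Fin n → ℂ) : vecMulVec x (0 : Fin n → ℂ) = 0 := by
  ext i j; simp [vecMulVec_apply]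

lemma norm_smul_add_smul_ge (s t : ℂ) (x u : Fin n → ℂ) (h : star u ⬝ᵥ x = 0) :
    ‖s‖ * ‖ev x‖ ≤ ‖ev (s • x + t • u)‖ := by
  have hinner : @inner ℂ _ _ (s • ev x) (t • ev u) = 0 := by
    rw [inner_smul_left, inner_smul_right]
    have : @inner ℂ _ _ (ev x) (ev u) = 0 := by
      rw [← inner_conj_symm, ev_inner, h, map_zero]
    rw [this, mul_zero, mul_zero]
  have hsq := norm_add_sq_eq_norm_sq_add_norm_sq_of_inner_eq_zero _ _ hinner
  have : ev (s • x + t • u) = s • ev x + t • ev u := rfl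
  rw [this]
  have h1 : ‖s • ev x‖ = ‖s‖ * ‖ev x‖ := norm_smul s (ev x)
  nlinarith [norm_nonneg (s • ev x + t • ev u), norm_nonneg (t • ev u),
    norm_nonneg (s • ev x)]

lemma strongBJ_vecMulVec {x u : Fin n → ℂ} (y v : Fin n → ℂ) (h : star u ⬝ᵥ x = 0) :
    StrongBJ (vecMulVec x y) (vecMulVec u v) := by
  intro C
  rcases eq_or_ne y 0 with rfl | hy
  · rw [vecMulVec_zero_right]
    simpa using norm_nonneg _
  have hy' : 0 < ‖ev y‖ := by
    simp only [norm_pos_iff]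
    exact fun hc => hy (congrArg (WithLp.equiv 2 _) hc)
  have key : (vecMulVec x y + vecMulVec u v * C) *ᵥ star y
      = ((‖ev y‖ : ℂ) ^ 2) • x + (v ⬝ᵥ (C *ᵥ star y)) • u := by
    rw [add_mulVec, ← mulVec_mulVec, mulVec_vecMulVec, mulVec_vecMulVec, dot_star_self]
  have h1 : ‖((‖ev y‖ : ℂ) ^ 2)‖ * ‖ev x‖ ≤ ‖ev ((vecMulVec x y + vecMulVec u v * C) *ᵥ star y)‖ := by
    rw [key]; exact norm_smul_add_smul_ge _ _ _ _ h
  have h2 := ev_mulVec_le (vecMulVec x y + vecMulVec u v * C) (star y)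
  rw [ev_norm_star] at h2
  have h3 : ‖((‖ev y‖ : ℂ) ^ 2)‖ = ‖ev y‖ * ‖ev y‖ := by
    rw [norm_pow]; simp [sq, abs_of_nonneg (norm_nonneg _)]
  have h4 := norm_vecMulVec_le x y
  rw [h3] at h1
  calc ‖vecMulVec x y‖ ≤ ‖ev x‖ * ‖ev y‖ := h4
    _ ≤ ‖vecMulVec x y + vecMulVec u v * C‖ := by nlinarith

lemma ev_norm_pos {y : Fin n → ℂ} (hy : y ≠ 0) : 0 < ‖ev y‖ := by
  simp only [norm_pos_iff]
  exact fun hc => hy (congrArg (WithLp.equiv 2 _) hc)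

lemma vecMulVec_smul_left (c : ℂ) (a b : Fin n → ℂ) :
    vecMulVec (c • a) b = c • vecMulVec a b := by
  ext i j; simp [vecMulVec_apply, mul_assoc]

lemma vecMulVec_smul_right (c : ℂ) (a b : Fin n → ℂ) :
    vecMulVec a (c • b) = c • vecMulVec a b := by
  ext i j; simp [vecMulVec_apply]; ring

lemma vecMulVec_add_left (a b y : Fin n → ℂ) :
    vecMulVec (a + b) y = vecMulVec a y + vecMulVec b y := by
  ext i j; simp [vecMulVec_apply]; ring

lemma dot_star_self' (u : Fin n → ℂ) : star u ⬝ᵥ u = ((‖ev u‖ : ℂ)) ^ 2 := by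
  rw [← dotProduct_comm, dot_star_self]

lemma dot_of_strongBJ {x y u v : Fin n → ℂ} (hy : y ≠ 0) (hu : u ≠ 0) (hv : v ≠ 0)
    (hBJ : StrongBJ (vecMulVec x y) (vecMulVec u v)) : star u ⬝ᵥ x = 0 := by
  have hud : star u ⬝ᵥ u ≠ 0 := by
    rw [dot_star_self']
    exact pow_ne_zero _ (Complex.ofReal_ne_zero.mpr (ev_norm_pos hu).ne')
  have hvd : v ⬝ᵥ star v ≠ 0 := by
    rw [dot_star_self]
    exact pow_ne_zero _ (Complex.ofReal_ne_zero.mpr (ev_norm_pos hv).ne')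
  set α : ℂ := (star u ⬝ᵥ x) / (star u ⬝ᵥ u) with hα
  have hax : star u ⬝ᵥ x = α * (star u ⬝ᵥ u) := (div_mul_cancel₀ _ hud).symm
  set w : Fin n → ℂ := x - α • u with hw
  have hworth : star u ⬝ᵥ w = 0 := by
    rw [hw, sub_eq_add_neg, dotProduct_add, dotProduct_neg, dotProduct_smul, hax]
    simp [smul_eq_mul]
  -- choose C with vecMulVec u v * C = vecMulVec (-α • u) y
  set C : Matrix (Fin n) (Fin n) ℂ :=
    vecMulVec (star v) (((v ⬝ᵥ star v)⁻¹ * (-α)) • y) with hC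
  have hBC : vecMulVec u v * C = -α • vecMulVec u y := by
    rw [hC, _root_.mul_vecMulVec, mulVec_vecMulVec, vecMulVec_smul_left, vecMulVec_smul_right,
      smul_smul]
    have hscal : v ⬝ᵥ star v * ((v ⬝ᵥ star v)⁻¹ * -α) = -α := by
      field_simp
    rw [hscal]
  have hsum : vecMulVec x y + vecMulVec u v * C = vecMulVec w y := by
    have hwx : w = x + (-α) • u := by rw [hw, neg_smul, sub_eq_add_neg]
    rw [hBC, ← vecMulVec_smul_left, ← vecMulVec_add_left, ← hwx]
  have h1 := hBJ C
  rw [hsum] at h1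
  have h2 := norm_vecMulVec_le w y
  have h3 := norm_vecMulVec_ge x y
  have hy' := ev_norm_pos hy
  have hxw : ‖ev x‖ ≤ ‖ev w‖ := by nlinarith
  -- Pythagoras: ‖ev x‖² = ‖ev w‖² + ‖α • ev u‖²
  have hinner : @inner ℂ _ _ (ev w) (α • ev u) = 0 := by
    rw [inner_smul_right, ← inner_conj_symm, ev_inner, hworth, map_zero, mul_zero]
  have hsq := norm_add_sq_eq_norm_sq_add_norm_sq_of_inner_eq_zero _ _ hinner
  have hxeq : ev w + α • ev u = ev x := by
    have : w + α • u = x := by rw [hw]; abel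
    exact congrArg ev this
  rw [hxeq] at hsq
  have hzero : ‖α • ev u‖ = 0 := by nlinarith [norm_nonneg (α • ev u), norm_nonneg (ev w), norm_nonneg (ev x)]
  rw [norm_smul] at hzero
  have hup := ev_norm_pos hu
  have hα0 : α = 0 := by
    rcases mul_eq_zero.mp hzero with h | h
    · exact norm_eq_zero.mp h
    · exact absurd h (ne_of_gt hup)
  rw [hax, hα0, zero_mul]

open ComplexConjugate in
lemma sigma_id_or_conj (σ : ℂ →+* ℂ) (hcomm : ∀ t : ℂ, σ (conj t) = conj (σ t)) :
    σ = RingHom.id ℂ ∨ σ = starRingEnd ℂ := by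
  have hreal : ∀ r : ℝ, (σ (r : ℂ)).im = 0 := by
    intro r
    have h1 : conj (σ (r : ℂ)) = σ (r : ℂ) := by
      rw [← hcomm, Complex.conj_ofReal]
    have := congrArg Complex.im h1
    simp only [Complex.conj_im] at this
    linarith
  let τ : ℝ →+* ℝ :=
    { toFun := fun r => (σ (r : ℂ)).re
      map_one' := by simp
      map_zero' := by simp
      map_mul' := fun r s => by
        push_cast
        rw [_root_.map_mul]
        rw [Complex.mul_re, hreal, hreal, mul_zero, sub_zero]
      map_add' := fun r s => by
        push_cast
        rw [_root_.map_add, Complex.add_re] }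
  have hτ : τ = RingHom.id ℝ := Subsingleton.elim _ _
  have hfix : ∀ r : ℝ, σ (r : ℂ) = (r : ℂ) := by
    intro r
    have h1 : (σ (r : ℂ)).re = r := congrArg (· r) (congrArg DFunLike.coe hτ)
    exact Complex.ext h1 (hreal r)
  have hI2 : (σ Complex.I) ^ 2 = -1 := by
    have h := hfix (-1)
    push_cast at h
    rw [← map_pow, Complex.I_sq, h]
  have hI : σ Complex.I = Complex.I ∨ σ Complex.I = -Complex.I := by
    have : (σ Complex.I - Complex.I) * (σ Complex.I + Complex.I) = 0 := by
      have := hI2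
      linear_combination hI2 - Complex.I_sq
    rcases mul_eq_zero.mp this with h | h
    · left; linear_combination h
    · right; linear_combination h
  rcases hI with h | h
  · left
    ext z
    have : z = (z.re : ℂ) + (z.im : ℂ) * Complex.I := (Complex.re_add_im z).symm
    rw [RingHom.id_apply, this, _root_.map_add, _root_.map_mul, hfix, hfix, h]
  · right
    ext z
    have : z = (z.re : ℂ) + (z.im : ℂ) * Complex.I := (Complex.re_add_im z).symm
    rw [this, _root_.map_add, _root_.map_mul, hfix, hfix, h]
    rw [_root_.map_add, _root_.map_mul, Complex.conj_ofReal, Complex.conj_ofReal, Complex.conj_I]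

lemma sigma_comp_ne_zero (σ : ℂ →+* ℂ) {x : Fin n → ℂ} (hx : x ≠ 0) : σ ∘ x ≠ 0 := by
  intro hc
  apply hx
  funext i
  have := congrFun hc i
  simp only [Function.comp_apply, Pi.zero_apply] at this ⊢
  exact σ.injective (by rw [this, map_zero])

lemma mulVec_ne_zero {P : Matrix (Fin n) (Fin n) ℂ} (hP : IsUnit P) {a : Fin n → ℂ}
    (ha : a ≠ 0) : P *ᵥ a ≠ 0 := by
  intro hc
  apply ha
  have h1 : (↑hP.unit⁻¹ : Matrix (Fin n) (Fin n) ℂ) *ᵥ (P *ᵥ a) = 0 := by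
    rw [hc, mulVec_zero]
  rw [mulVec_mulVec] at h1
  have h2 : (↑hP.unit⁻¹ : Matrix (Fin n) (Fin n) ℂ) * P = 1 := by
    have := hP.unit.inv_mul
    rwa [IsUnit.unit_spec] at this
  rwa [h2, one_mulVec] at h1

lemma vecMul_ne_zero {Q : Matrix (Fin n) (Fin n) ℂ} (hQ : IsUnit Q) {a : Fin n → ℂ}
    (ha : a ≠ 0) : a ᵥ* Q ≠ 0 := by
  intro hc
  apply ha
  have h1 : (a ᵥ* Q) ᵥ* (↑hQ.unit⁻¹ : Matrix (Fin n) (Fin n) ℂ) = 0 := by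
    rw [hc, zero_vecMul]
  rw [vecMul_vecMul] at h1
  have h2 : Q * (↑hQ.unit⁻¹ : Matrix (Fin n) (Fin n) ℂ) = 1 := by
    have := hQ.unit.mul_inv
    rwa [IsUnit.unit_spec] at this
  rwa [h2, vecMul_one] at h1

lemma sigma_comp_single (σ : ℂ →+* ℂ) (i : Fin n) :
    σ ∘ (Pi.single i (1 : ℂ)) = Pi.single i (1 : ℂ) := by
  funext k
  simp [Pi.single_apply, apply_ite σ]

lemma key_orth {n : ℕ} (hn : 2 ≤ n) (σ : ℂ →+* ℂ) (P Q : Matrix (Fin n) (Fin n) ℂ)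
    (hP : IsUnit P) (hQ : IsUnit Q)
    (hpres : ∀ A B : Matrix (Fin n) (Fin n) ℂ,
      MutualBJ A B → MutualBJ (P * A.map σ * Q) (P * B.map σ * Q))
    {x u : Fin n → ℂ} (hx : x ≠ 0) (hu : u ≠ 0) (h : star u ⬝ᵥ x = 0) :
    star (P *ᵥ (σ ∘ u)) ⬝ᵥ (P *ᵥ (σ ∘ x)) = 0 := by
  have i0 : Fin n := ⟨0, by omega⟩
  set e0 : Fin n → ℂ := Pi.single i0 1 with he0def
  have he0 : e0 ≠ 0 := by
    intro hc
    have := congrFun hc i0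
    simp [he0def] at this
  have h' : star x ⬝ᵥ u = 0 := by
    rw [← ev_inner, ← inner_conj_symm, ev_inner, h, map_zero]
  have hA : MutualBJ (vecMulVec x e0) (vecMulVec u e0) :=
    ⟨strongBJ_vecMulVec _ _ h, strongBJ_vecMulVec _ _ h'⟩
  have happ := hpres _ _ hA
  have himg : ∀ z : Fin n → ℂ, P * (vecMulVec z e0).map σ * Q
      = vecMulVec (P *ᵥ (σ ∘ z)) (e0 ᵥ* Q) := by
    intro z
    rw [map_vecMulVec, he0def, sigma_comp_single, ← he0def, _root_.mul_vecMulVec, vecMulVec_mul]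
  rw [himg, himg] at happ
  exact dot_of_strongBJ (vecMul_ne_zero hQ he0) (mulVec_ne_zero hP (sigma_comp_ne_zero σ hu))
    (vecMul_ne_zero hQ he0) happ.1

lemma star_mulVec_dot (P : Matrix (Fin n) (Fin n) ℂ) (a b : Fin n → ℂ) :
    star (P *ᵥ a) ⬝ᵥ (P *ᵥ b) = star a ⬝ᵥ ((Pᴴ * P) *ᵥ b) := by
  rw [star_mulVec, dotProduct_mulVec, vecMul_vecMul, ← dotProduct_mulVec]

open ComplexConjugate in
lemma dot_expand (H : Matrix (Fin n) (Fin n) ℂ) {i j : Fin n} (hij : i ≠ j) (a b c d : ℂ) :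
    star (a • (Pi.single i 1 : Fin n → ℂ) + b • (Pi.single j 1 : Fin n → ℂ)) ⬝ᵥ
      (H *ᵥ (c • (Pi.single i 1 : Fin n → ℂ) + d • (Pi.single j 1 : Fin n → ℂ)))
    = conj a * (c * H i i + d * H i j) + conj b * (c * H j i + d * H j j) := by
  have hs : ∀ (s t : ℂ), s • (Pi.single i 1 : Fin n → ℂ) + t • (Pi.single j 1 : Fin n → ℂ)
      = Pi.single i s + Pi.single j t := by
    intro s t
    funext k
    simp [Pi.single_apply, mul_ite]
  rw [hs, hs]
  rw [star_add, add_dotProduct, mulVec_add]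
  have hstar : ∀ (k : Fin n) (s : ℂ), star (Pi.single k s : Fin n → ℂ) = Pi.single k (conj s) := by
    intro k s
    funext l
    simp [Pi.single_apply, apply_ite (starRingEnd ℂ)]
  have hmv : ∀ (k : Fin n) (s : ℂ), H *ᵥ (Pi.single k s : Fin n → ℂ) = fun l => H l k * s := by
    intro k s
    funext l
    simp [mulVec, dotProduct, Pi.single_apply, mul_ite]
  rw [hstar, hstar, hmv, hmv]
  simp only [dotProduct_add, single_dotProduct]
  ring

open ComplexConjugate in
lemma dot_single_expand {i j : Fin n} (hij : i ≠ j) (a b c d : ℂ) :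
    star (a • (Pi.single i 1 : Fin n → ℂ) + b • (Pi.single j 1 : Fin n → ℂ)) ⬝ᵥ
      (c • (Pi.single i 1 : Fin n → ℂ) + d • (Pi.single j 1 : Fin n → ℂ))
    = conj a * c + conj b * d := by
  have := dot_expand (1 : Matrix (Fin n) (Fin n) ℂ) hij a b c d
  rw [one_mulVec] at this
  rw [this, Matrix.one_apply_eq, Matrix.one_apply_ne hij, Matrix.one_apply_ne hij.symm,
    Matrix.one_apply_eq]
  ring

lemma sigma_comp_lin (σ : ℂ →+* ℂ) (s t : ℂ) (i j : Fin n) :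
    σ ∘ (s • (Pi.single i 1 : Fin n → ℂ) + t • (Pi.single j 1 : Fin n → ℂ))
      = σ s • (Pi.single i 1 : Fin n → ℂ) + σ t • (Pi.single j 1 : Fin n → ℂ) := by
  funext k
  simp [Pi.single_apply, mul_ite, apply_ite σ]

lemma single_ne_zero' (i : Fin n) : (Pi.single i 1 : Fin n → ℂ) ≠ 0 := by
  intro hc
  have := congrFun hc i
  simp at this

lemma combo_ne_zero_left {i j : Fin n} (hij : i ≠ j) (t : ℂ) :
    (1:ℂ) • (Pi.single i 1 : Fin n → ℂ) + t • (Pi.single j 1 : Fin n → ℂ) ≠ 0 := by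
  intro hc
  have := congrFun hc i
  simp [Pi.single_apply, hij] at this

lemma combo_ne_zero_right {i j : Fin n} (hij : i ≠ j) (s : ℂ) :
    s • (Pi.single i 1 : Fin n → ℂ) + (1:ℂ) • (Pi.single j 1 : Fin n → ℂ) ≠ 0 := by
  intro hc
  have := congrFun hc j
  simp [Pi.single_apply, hij.symm] at this

open ComplexConjugate in
theorem stmt9 {n : ℕ} (hn : 2 ≤ n) (σ : ℂ →+* ℂ) (P Q : Matrix (Fin n) (Fin n) ℂ)
    (hP : IsUnit P) (hQ : IsUnit Q)
    (hpres : ∀ A B : Matrix (Fin n) (Fin n) ℂ,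
      MutualBJ A B → MutualBJ (P * A.map σ * Q) (P * B.map σ * Q)) :
    (σ = RingHom.id ℂ ∨ σ = starRingEnd ℂ) ∧
      ∃ c : ℝ, 0 < c ∧ Pᴴ * P = (c : ℂ) • (1 : Matrix (Fin n) (Fin n) ℂ) := by
  have hn0 : 0 < n := by omega
  have hn1 : 1 < n := by omega
  set i0 : Fin n := ⟨0, hn0⟩ with hi0
  set i1 : Fin n := ⟨1, hn1⟩ with hi1
  have hne : i0 ≠ i1 := by simp [hi0, hi1, Fin.ext_iff]
  set H : Matrix (Fin n) (Fin n) ℂ := Pᴴ * P with hH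
  have K : ∀ (x u : Fin n → ℂ), x ≠ 0 → u ≠ 0 → star u ⬝ᵥ x = 0 →
      star (σ ∘ u) ⬝ᵥ (H *ᵥ (σ ∘ x)) = 0 := by
    intro x u hx hu h
    rw [hH, ← star_mulVec_dot]
    exact key_orth hn σ P Q hP hQ hpres hx hu h
  -- off-diagonal entries vanish
  have hoff : ∀ i j : Fin n, i ≠ j → H j i = 0 := by
    intro i j hij
    have hK := K ((1:ℂ) • (Pi.single i 1 : Fin n → ℂ) + (0:ℂ) • (Pi.single j 1 : Fin n → ℂ))
      ((0:ℂ) • (Pi.single i 1 : Fin n → ℂ) + (1:ℂ) • (Pi.single j 1 : Fin n → ℂ))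
      (combo_ne_zero_left hij 0) (combo_ne_zero_right hij 0)
      (by rw [dot_single_expand hij]; simp)
    rw [sigma_comp_lin, sigma_comp_lin, _root_.map_one, _root_.map_zero] at hK
    rw [dot_expand H hij] at hK
    simpa using hK
  -- the key relation
  have hrel : ∀ i j : Fin n, i ≠ j → ∀ t : ℂ, σ t * H j j = conj (σ (conj t)) * H i i := by
    intro i j hij t
    have hdot : star ((-(conj t)) • (Pi.single i 1 : Fin n → ℂ)
        + (1:ℂ) • (Pi.single j 1 : Fin n → ℂ)) ⬝ᵥ
        ((1:ℂ) • (Pi.single i 1 : Fin n → ℂ) + t • (Pi.single j 1 : Fin n → ℂ)) = 0 := by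
      rw [dot_single_expand hij]
      simp
    have hK := K _ _ (combo_ne_zero_left hij t) (combo_ne_zero_right hij (-(conj t))) hdot
    rw [sigma_comp_lin, sigma_comp_lin, _root_.map_one] at hK
    rw [dot_expand H hij] at hK
    rw [hoff i j hij, hoff j i hij.symm] at hK
    simp only [map_neg, _root_.map_one, one_mul, mul_one, mul_zero, add_zero, zero_add] at hK
    linear_combination hK
  -- positivity of the diagonal
  set w : Fin n → ℂ := P *ᵥ (Pi.single i0 1 : Fin n → ℂ) with hw
  have hwne : w ≠ 0 := mulVec_ne_zero hP (single_ne_zero' i0)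
  have hcpos : 0 < ‖ev w‖ ^ 2 := pow_pos (ev_norm_pos hwne) 2
  have hH00 : H i0 i0 = ((‖ev w‖ ^ 2 : ℝ) : ℂ) := by
    have h1 : star ((1:ℂ) • (Pi.single i0 1 : Fin n → ℂ) + (0:ℂ) • (Pi.single i1 1 : Fin n → ℂ))
        ⬝ᵥ (H *ᵥ ((1:ℂ) • (Pi.single i0 1 : Fin n → ℂ)
          + (0:ℂ) • (Pi.single i1 1 : Fin n → ℂ))) = H i0 i0 := by
      rw [dot_expand H hne]; simp
    have h2 : (1:ℂ) • (Pi.single i0 1 : Fin n → ℂ) + (0:ℂ) • (Pi.single i1 1 : Fin n → ℂ)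
        = (Pi.single i0 1 : Fin n → ℂ) := by simp
    rw [h2] at h1
    rw [← h1, hH, ← star_mulVec_dot, ← hw, dot_star_self']
    push_cast
    ring
  -- all diagonal entries are equal
  have hdiag : ∀ i : Fin n, H i i = H i0 i0 := by
    intro i
    by_cases hi : i = i0
    · rw [hi]
    · have := hrel i0 i (fun hc => hi hc.symm) 1
      simpa using this
  -- sigma commutes with conjugation
  have hcne : H i0 i0 ≠ 0 := by
    rw [hH00]
    exact_mod_cast hcpos.ne'
  have hconj : ∀ t : ℂ, σ (conj t) = conj (σ t) := by
    intro t
    have := hrel i0 i1 hne t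
    rw [hdiag i1] at this
    have h2 : σ t = conj (σ (conj t)) := mul_right_cancel₀ hcne this
    have := congrArg (starRingEnd ℂ) h2
    rw [Complex.conj_conj] at this
    exact this.symm
  refine ⟨sigma_id_or_conj σ hconj, ‖ev w‖ ^ 2, hcpos, ?_⟩
  ext i j
  rw [Matrix.smul_apply]
  by_cases hij : i = j
  · subst hij
    rw [Matrix.one_apply_eq, hdiag i, hH00]
    simp
  · rw [Matrix.one_apply_ne hij, hoff j i (fun hc => hij hc.symm)]
    simp
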